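/- Let f be a unimodal Allee map on [0,M] with threshold A_f, carrying capacity K_f, peak B_f and maximum M_f, and let g be a unimodal Allee map on [0,M] with threshold A_g, carrying capacity K_g, peak B_g and maximum M_g, where M = max(M_f, M_g). Assume A_g < A_f, that f is differentiable on (B_f, M_f) with |f'(x)| < 1 for every x ∈ (B_f, M_f), that there exist m ≥ 1 and maps h₁, …, h_m, each equal to f or to g, such that (h₁ ∘ h₂ ∘ ⋯ ∘ h_m)(K_f) < A_f, and additionally that f(g(A_f)) ≠ A_f. Then for every x₀ ∈ [0,M], μ({ω : the sequence n ↦ X n ω converges to 0}) = 1 (taking b = M in the definition of the process). -/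

import Mathlib

open MeasureTheory ProbabilityTheory Filter Set

/-- `f` is a unimodal Allee map on `[0, b]` with threshold `A`, carrying capacity `K`
and peak `B` (its maximum is `f B`). -/
def IsUnimodalAlleeMap (b A K B : ℝ) (f : ℝ → ℝ) : Prop :=
  0 < A ∧ A < K ∧ K ≤ b ∧ A < B ∧ B < K ∧
  MapsTo f (Icc 0 b) (Icc 0 b) ∧
  ContinuousOn f (Icc 0 b) ∧
  StrictMonoOn f (Ioo 0 B) ∧ StrictAntiOn f (Ioo B b) ∧
  f 0 = 0 ∧ f A = A ∧ f K = K ∧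
  (∀ x ∈ Ioo 0 A ∪ Ioc K b, f x < x) ∧
  (∀ x ∈ Ioo A K, x < f x)

/-- The random orbit driven by a sequence of coin flips: apply `f` when the coin shows
`true` and `g` when it shows `false`. -/
def randOrbit (f g : ℝ → ℝ) (x₀ : ℝ) : ℕ → (ℕ → Bool) → ℝ
  | 0, _ => x₀
  | n + 1, ω => if ω n then f (randOrbit f g x₀ n ω) else g (randOrbit f g x₀ n ω)

set_option maxHeartbeats 1000000
open Topology

lemma monoOn_Icc_of_Ioo {a b : ℝ} {φ : ℝ → ℝ} (hc : ContinuousOn φ (Icc a b))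
    (hm : StrictMonoOn φ (Ioo a b)) : MonotoneOn φ (Icc a b) := by
  rintro x ⟨hax, hxb⟩ y ⟨hay, hyb⟩ hxy
  rcases eq_or_lt_of_le hxy with rfl | hlt
  · exact le_refl _
  obtain ⟨t0, ht01, ht02⟩ : ∃ t0, x < t0 ∧ t0 < y := ⟨(x+y)/2, by linarith, by linarith⟩
  have ht0ab : t0 ∈ Ioo a b := ⟨lt_of_le_of_lt hax ht01, lt_of_lt_of_le ht02 hyb⟩
  have hIxt : Ioo x t0 ⊆ Ioo a b := fun z hz => ⟨lt_of_le_of_lt hax hz.1, lt_trans hz.2 ht0ab.2⟩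
  have hIty : Ioo t0 y ⊆ Ioo a b := fun z hz => ⟨lt_trans ht0ab.1 hz.1, lt_of_lt_of_le hz.2 hyb⟩
  have h1 : φ x ≤ φ t0 := by
    have hcx : ContinuousWithinAt φ (Ioo x t0) x :=
      (hc x ⟨hax, hxb⟩).mono (fun z hz => ⟨le_of_lt (lt_of_le_of_lt hax hz.1),
        le_of_lt (lt_of_lt_of_le (lt_trans hz.2 ht0ab.2) le_rfl)⟩)
    have hne : (𝓝[Ioo x t0] x).NeBot := left_nhdsWithin_Ioo_neBot ht01
    exact le_of_tendsto hcx (eventually_nhdsWithin_of_forall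
      (fun z hz => le_of_lt (hm (hIxt hz) ht0ab hz.2)))
  have h2 : φ t0 ≤ φ y := by
    have hcy : ContinuousWithinAt φ (Ioo t0 y) y :=
      (hc y ⟨hay, hyb⟩).mono (fun z hz => ⟨le_of_lt (lt_trans ht0ab.1 hz.1),
        le_of_lt (lt_of_lt_of_le hz.2 hyb)⟩)
    have hne : (𝓝[Ioo t0 y] y).NeBot := right_nhdsWithin_Ioo_neBot ht02
    exact ge_of_tendsto hcy (eventually_nhdsWithin_of_forall
      (fun z hz => le_of_lt (hm ht0ab (hIty hz) hz.1)))
  exact le_trans h1 h2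

lemma antiOn_Icc_of_Ioo {a b : ℝ} {φ : ℝ → ℝ} (hc : ContinuousOn φ (Icc a b))
    (hm : StrictAntiOn φ (Ioo a b)) : AntitoneOn φ (Icc a b) := by
  have := monoOn_Icc_of_Ioo (φ := fun x => -(φ x)) (hc.neg)
    (fun u hu v hv huv => neg_lt_neg (hm hu hv huv))
  intro u hu v hv huv
  have h2 := this hu hv huv
  simpa using h2

section Det
variable {M Af Kf Bf : ℝ} {f : ℝ → ℝ}

lemma uam_max (hf : IsUnimodalAlleeMap M Af Kf Bf f) : ∀ x ∈ Icc (0:ℝ) M, f x ≤ f Bf := by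
  obtain ⟨hA0, hAK, hKb, hAB, hBK, hmaps, hcont, hmono, hanti, h0, hfxA, hfxK, hbelow, habove⟩ := hf
  have hB0 : (0:ℝ) < Bf := lt_trans hA0 hAB
  have hBM : Bf < M := lt_of_lt_of_le hBK hKb
  have hmono' : MonotoneOn f (Icc 0 Bf) :=
    monoOn_Icc_of_Ioo (hc := hcont.mono (Icc_subset_Icc le_rfl hBM.le)) hmono
  have hanti' : AntitoneOn f (Icc Bf M) :=
    antiOn_Icc_of_Ioo (hc := hcont.mono (Icc_subset_Icc hB0.le le_rfl)) hanti
  intro x ⟨hx0, hxM⟩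
  rcases le_or_gt x Bf with h | h
  · exact hmono' ⟨hx0, h⟩ ⟨hB0.le, le_rfl⟩ h
  · exact hanti' ⟨le_rfl, hBM.le⟩ ⟨h.le, hxM⟩ h.le

lemma uam_iter_mem (hf : IsUnimodalAlleeMap M Af Kf Bf f) {x : ℝ} (hx : x ∈ Icc (0:ℝ) M) :
    ∀ n, f^[n] x ∈ Icc (0:ℝ) M := by
  intro n
  induction n with
  | zero => exact hx
  | succ n ih => rw [Function.iterate_succ_apply']; exact hf.2.2.2.2.2.1 ih

lemma uam_contract (hf : IsUnimodalAlleeMap M Af Kf Bf f)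
    (hdiff : ∀ x ∈ Ioo Bf (f Bf), DifferentiableAt ℝ f x)
    (hder : ∀ x ∈ Ioo Bf (f Bf), |deriv f x| < 1) :
    ∀ u v : ℝ, Bf ≤ u → u < v → v ≤ f Bf → |f v - f u| < v - u := by
  obtain ⟨hA0, hAK, hKb, hAB, hBK, hmaps, hcont, hmono, hanti, h0, hfxA, hfxK, hbelow, habove⟩ := hf
  intro u v huB huv hvM
  have hB0 : (0:ℝ) < Bf := lt_trans hA0 hAB
  have hBM : Bf < M := lt_of_lt_of_le hBK hKb
  have hfBM : f Bf ≤ M := (hmaps ⟨hB0.le, hBM.le⟩).2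
  have hsub : Icc u v ⊆ Icc (0:ℝ) M :=
    Icc_subset_Icc (le_trans hB0.le huB) (le_trans hvM hfBM)
  have hsub2 : Ioo u v ⊆ Ioo Bf (f Bf) := Ioo_subset_Ioo huB hvM
  obtain ⟨c, hc, hc2⟩ := exists_deriv_eq_slope f huv (hcont.mono hsub)
    (fun x hx => (hdiff x (hsub2 hx)).differentiableWithinAt)
  have hlt := hder c (hsub2 hc)
  rw [hc2] at hlt
  have hpos : (0:ℝ) < v - u := by linarith
  rw [abs_div] at hlt
  rw [abs_of_pos hpos] at hlt
  calc |f v - f u| = |f v - f u| / (v-u) * (v-u) := by field_simp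
  _ < 1 * (v - u) := by exact mul_lt_mul_of_pos_right hlt hpos
  _ = v - u := one_mul _

lemma uam_K_le (hf : IsUnimodalAlleeMap M Af Kf Bf f) : Kf ≤ f Bf := by
  have := uam_max hf Kf ⟨(lt_trans hf.1 hf.2.1).le, hf.2.2.1⟩
  rwa [hf.2.2.2.2.2.2.2.2.2.2.2.1] at this

lemma uam_MK (hf : IsUnimodalAlleeMap M Af Kf Bf f)
    (hdiff : ∀ x ∈ Ioo Bf (f Bf), DifferentiableAt ℝ f x)
    (hder : ∀ x ∈ Ioo Bf (f Bf), |deriv f x| < 1) :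
    f Bf - Kf < Kf - Bf := by
  have hBK : Bf < Kf := hf.2.2.2.2.1
  have h := uam_contract hf hdiff hder Bf Kf le_rfl hBK (uam_K_le hf)
  rw [hf.2.2.2.2.2.2.2.2.2.2.2.1] at h
  rw [abs_sub_comm] at h
  exact lt_of_le_of_lt (le_abs_self _) h

lemma uam_ptcontr (hf : IsUnimodalAlleeMap M Af Kf Bf f)
    (hdiff : ∀ x ∈ Ioo Bf (f Bf), DifferentiableAt ℝ f x)
    (hder : ∀ x ∈ Ioo Bf (f Bf), |deriv f x| < 1) :
    ∀ x : ℝ, Bf ≤ x → x ≤ f Bf → x ≠ Kf → |f x - Kf| < |x - Kf| := by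
  intro x hBx hxM hne
  have hfK : f Kf = Kf := hf.2.2.2.2.2.2.2.2.2.2.2.1
  have hBK : Bf < Kf := hf.2.2.2.2.1
  have hKle : Kf ≤ f Bf := uam_K_le hf
  rcases lt_or_gt_of_ne hne with h | h
  · have h1 := uam_contract hf hdiff hder x Kf hBx h hKle
    rw [hfK] at h1
    have h2 : |x - Kf| = Kf - x := by rw [abs_of_neg (by linarith : x - Kf < 0)]; ring
    have h3 : |f x - Kf| = |Kf - f x| := abs_sub_comm _ _
    rw [h2, h3]; exact h1
  · have := uam_contract hf hdiff hder Kf x hBK.le h hxM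
    rw [hfK] at this
    rw [abs_of_pos (by linarith : (0:ℝ) < x - Kf)]
    linarith [this]

lemma uam_zone_inv (hf : IsUnimodalAlleeMap M Af Kf Bf f)
    (hdiff : ∀ x ∈ Ioo Bf (f Bf), DifferentiableAt ℝ f x)
    (hder : ∀ x ∈ Ioo Bf (f Bf), |deriv f x| < 1) :
    ∀ x ∈ Icc Bf (f Bf), f x ∈ Icc Bf (f Bf) := by
  intro x ⟨hBx, hxM⟩
  have hA0 : (0:ℝ) < Af := hf.1
  have hAB : Af < Bf := hf.2.2.2.1
  have hBK : Bf < Kf := hf.2.2.2.2.1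
  have hB0 : (0:ℝ) < Bf := by linarith
  have hBM : Bf < M := lt_of_lt_of_le hBK hf.2.2.1
  have hfBM : f Bf ≤ M := (hf.2.2.2.2.2.1 ⟨hB0.le, hBM.le⟩).2
  have hxIcc : x ∈ Icc (0:ℝ) M := ⟨by linarith, le_trans hxM hfBM⟩
  have hub : f x ≤ f Bf := uam_max hf x hxIcc
  have hMK : f Bf - Kf < Kf - Bf := uam_MK hf hdiff hder
  constructor
  · rcases eq_or_ne x Kf with rfl | hne
    · rw [hf.2.2.2.2.2.2.2.2.2.2.2.1]; exact hBK.le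
    · have h1 : |f x - Kf| < |x - Kf| := uam_ptcontr hf hdiff hder x hBx hxM hne
      have h2 : |x - Kf| ≤ Kf - Bf := by
        rw [abs_le]; constructor <;> [linarith; linarith]
      have := abs_lt.mp (lt_of_lt_of_le h1 h2)
      linarith [this.1]
  · exact hub

lemma uam_enter_ball (hf : IsUnimodalAlleeMap M Af Kf Bf f)
    (hdiff : ∀ x ∈ Ioo Bf (f Bf), DifferentiableAt ℝ f x)
    (hder : ∀ x ∈ Ioo Bf (f Bf), |deriv f x| < 1) :
    ∀ ε : ℝ, 0 < ε → ∀ x ∈ Icc Bf (f Bf), ∃ n, |f^[n] x - Kf| < ε := by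
  intro ε hε x hx
  by_contra hcon
  push_neg at hcon
  have hA0 : (0:ℝ) < Af := hf.1
  have hAB : Af < Bf := hf.2.2.2.1
  have hBK : Bf < Kf := hf.2.2.2.2.1
  have hB0 : (0:ℝ) < Bf := by linarith
  have hBM : Bf < M := lt_of_lt_of_le hBK hf.2.2.1
  have hfBM : f Bf ≤ M := (hf.2.2.2.2.2.1 ⟨hB0.le, hBM.le⟩).2
  have hzsub : Icc Bf (f Bf) ⊆ Icc (0:ℝ) M := Icc_subset_Icc hB0.le hfBM
  -- the annulus
  set S : Set ℝ := {z | z ∈ Icc Bf (f Bf) ∧ ε ≤ |z - Kf|} with hSdef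
  have hSclosed : IsClosed S := by
    have h1 : IsClosed {z : ℝ | ε ≤ |z - Kf|} :=
      isClosed_le continuous_const ((continuous_id.sub continuous_const).abs)
    exact (isClosed_Icc.inter h1)
  have hScompact : IsCompact S :=
    (isCompact_Icc.of_isClosed_subset hSclosed (fun z hz => hz.1))
  have hSne : S.Nonempty := ⟨x, hx, hcon 0⟩
  have hcontf : ContinuousOn f S := hf.2.2.2.2.2.2.1.mono (fun z hz => hzsub hz.1)
  have hφcont : ContinuousOn (fun z => |f z - Kf| / |z - Kf|) S := by
    apply ContinuousOn.div
    · exact ((hcontf.sub continuousOn_const).abs)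
    · exact (((continuous_id.sub continuous_const).abs).continuousOn)
    · intro z hz
      exact ne_of_gt (lt_of_lt_of_le hε hz.2)
  obtain ⟨z₀, hz₀S, hmax'⟩ := hScompact.exists_isMaxOn hSne hφcont
  have hmax : ∀ z ∈ S, |f z - Kf| / |z - Kf| ≤ |f z₀ - Kf| / |z₀ - Kf| := fun z hz => hmax' hz
  set q := |f z₀ - Kf| / |z₀ - Kf| with hq
  have hz₀K : z₀ ≠ Kf := by
    intro h
    have h2 := hz₀S.2
    rw [h] at h2; simp at h2; linarith
  have hden : 0 < |z₀ - Kf| := lt_of_lt_of_le hε hz₀S.2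
  have hq1 : q < 1 := (div_lt_one hden).mpr
    (uam_ptcontr hf hdiff hder z₀ hz₀S.1.1 hz₀S.1.2 hz₀K)
  have hq0 : 0 ≤ q := div_nonneg (abs_nonneg _) (abs_nonneg _)
  have hstep : ∀ z ∈ S, |f z - Kf| ≤ q * |z - Kf| := by
    intro z hz
    have hd : 0 < |z - Kf| := lt_of_lt_of_le hε hz.2
    have hle := hmax z hz
    calc |f z - Kf| = |f z - Kf| / |z - Kf| * |z - Kf| := by field_simp
    _ ≤ q * |z - Kf| := mul_le_mul_of_nonneg_right hle hd.le
  have hiter : ∀ n, f^[n] x ∈ Icc Bf (f Bf) ∧ |f^[n] x - Kf| ≤ q^n * |x - Kf| := by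
    intro n; induction n with
    | zero => exact ⟨hx, by simp⟩
    | succ n ih =>
      have hzS : f^[n] x ∈ S := ⟨ih.1, hcon n⟩
      constructor
      · rw [Function.iterate_succ_apply']; exact uam_zone_inv hf hdiff hder _ ih.1
      · rw [Function.iterate_succ_apply']
        calc |f (f^[n] x) - Kf| ≤ q * |f^[n] x - Kf| := hstep _ hzS
        _ ≤ q * (q^n * |x - Kf|) := mul_le_mul_of_nonneg_left ih.2 hq0
        _ = q^(n+1) * |x - Kf| := by ring
  have htend : Tendsto (fun n => q^n * |x - Kf|) atTop (𝓝 (0 * |x - Kf|)) :=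
    ((tendsto_pow_atTop_nhds_zero_of_lt_one hq0 hq1).mul_const _)
  rw [zero_mul] at htend
  obtain ⟨n, hn⟩ := (htend.eventually (gt_mem_nhds hε)).exists
  exact absurd (lt_of_le_of_lt (hiter n).2 hn) (not_lt.mpr (hcon n))

lemma fix_limit {F : ℝ → ℝ} {a b : ℝ} (hcont : ContinuousOn F (Icc a b)) {y : ℕ → ℝ} {L : ℝ}
    (hy : ∀ n, y n ∈ Icc a b) (hstep : ∀ n, y (n+1) = F (y n))
    (hL : Tendsto y atTop (𝓝 L)) (hLmem : L ∈ Icc a b) : F L = L := by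
  have h1 : Tendsto y atTop (𝓝[Icc a b] L) :=
    tendsto_nhdsWithin_of_tendsto_nhds_of_eventually_within _ hL (Eventually.of_forall hy)
  have h2 : Tendsto (fun n => F (y n)) atTop (𝓝 (F L)) := (hcont L hLmem).tendsto.comp h1
  have h3 : Tendsto (fun n => y (n+1)) atTop (𝓝 L) := hL.comp (tendsto_add_atTop_nat 1)
  have h4 : (fun n => F (y n)) = fun n => y (n+1) := funext fun n => (hstep n).symm
  rw [h4] at h2
  exact tendsto_nhds_unique h2 h3

lemma uam_decay (hf : IsUnimodalAlleeMap M Af Kf Bf f) :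
    ∀ c, 0 < c → ∀ x, 0 ≤ x → x < Af → ∃ n, f^[n] x < c := by
  intro c hc x hx0 hxA
  by_contra hcon
  push_neg at hcon
  have hAM : Af < M := lt_of_lt_of_le hf.2.1 hf.2.2.1
  have hxM : x ∈ Icc (0:ℝ) M := ⟨hx0, by linarith⟩
  have hinv : ∀ n, f^[n] x < Af ∧ f^[n+1] x ≤ f^[n] x := by
    intro n
    induction n with
    | zero =>
      refine ⟨by simpa using hxA, ?_⟩
      simp only [Function.iterate_one, Function.iterate_zero_apply]
      exact le_of_lt (hf.2.2.2.2.2.2.2.2.2.2.2.2.1 x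
        (Or.inl ⟨lt_of_lt_of_le hc (by simpa using hcon 0), hxA⟩))
    | succ n ih =>
      have h1 : f^[n+1] x < Af := lt_of_le_of_lt ih.2 ih.1
      refine ⟨h1, ?_⟩
      rw [Function.iterate_succ_apply' f (n+1)]
      exact le_of_lt (hf.2.2.2.2.2.2.2.2.2.2.2.2.1 _
        (Or.inl ⟨lt_of_lt_of_le hc (hcon (n+1)), h1⟩))
  have hanti : Antitone (fun n => f^[n] x) := antitone_nat_of_succ_le (fun n => (hinv n).2)
  have hbdd : BddBelow (Set.range fun n => f^[n] x) :=
    ⟨0, by rintro z ⟨n, rfl⟩; exact (uam_iter_mem hf hxM n).1⟩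
  have htend := tendsto_atTop_ciInf hanti hbdd
  set L := ⨅ n, f^[n] x with hLdef
  have hcL : c ≤ L := le_ciInf (fun n => hcon n)
  have hLx : L ≤ x := by simpa using ciInf_le hbdd 0
  have hLmem : L ∈ Icc (0:ℝ) M := ⟨by linarith, by linarith⟩
  have hfix : f L = L := fix_limit hf.2.2.2.2.2.2.1 (fun n => uam_iter_mem hf hxM n)
    (fun n => Function.iterate_succ_apply' f n x) htend hLmem
  have : f L < L := hf.2.2.2.2.2.2.2.2.2.2.2.2.1 L (Or.inl ⟨by linarith, by linarith⟩)
  linarith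

lemma uam_incr (hf : IsUnimodalAlleeMap M Af Kf Bf f) :
    ∀ x ∈ Icc (0:ℝ) M, (∀ n, Af < f^[n] x) → ∃ n, f^[n] x ∈ Icc Bf (f Bf) := by
  intro x hx hall
  by_cases hB : ∃ n, Bf ≤ f^[n] (f x)
  · obtain ⟨n, hn⟩ := hB
    refine ⟨n+1, ?_, ?_⟩
    · rw [Function.iterate_succ_apply]; exact hn
    · rw [Function.iterate_succ_apply']
      exact uam_max hf _ (uam_iter_mem hf hx n)
  · push_neg at hB
    exfalso
    have hfx : f x ∈ Icc (0:ℝ) M := hf.2.2.2.2.2.1 hx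
    set y : ℕ → ℝ := fun n => f^[n] (f x) with hy
    have hyA : ∀ n, Af < y n := by
      intro n
      have := hall (n+1)
      rwa [Function.iterate_succ_apply] at this
    have hymem : ∀ n, y n ∈ Icc (0:ℝ) M := fun n => uam_iter_mem hf hfx n
    have hyIoo : ∀ n, y n ∈ Ioo Af Kf :=
      fun n => ⟨hyA n, lt_trans (hB n) hf.2.2.2.2.1⟩
    have hmono : Monotone y := monotone_nat_of_le_succ (by
      intro n
      have h1 : y n < f (y n) := hf.2.2.2.2.2.2.2.2.2.2.2.2.2 _ (hyIoo n)
      rw [hy]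
      simp only []
      rw [Function.iterate_succ_apply' f n]
      exact h1.le)
    have hbdd : BddAbove (Set.range y) := ⟨Bf, by rintro z ⟨n, rfl⟩; exact (hB n).le⟩
    have htend := tendsto_atTop_ciSup hmono hbdd
    set L := ⨆ n, y n with hLdef
    have hL1 : Af < L := lt_of_lt_of_le (hyA 0) (le_ciSup hbdd 0)
    have hL2 : L ≤ Bf := ciSup_le (fun n => (hB n).le)
    have hLmem : L ∈ Icc (0:ℝ) M := ⟨le_of_lt (lt_trans hf.1 hL1), le_trans hL2 (le_of_lt (lt_of_lt_of_le hf.2.2.2.2.1 hf.2.2.1))⟩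
    have hfix : f L = L := fix_limit hf.2.2.2.2.2.2.1 hymem
      (fun n => Function.iterate_succ_apply' f n (f x)) htend hLmem
    have : L < f L := hf.2.2.2.2.2.2.2.2.2.2.2.2.2 L ⟨hL1, lt_of_le_of_lt hL2 hf.2.2.2.2.1⟩
    linarith

lemma uam_nopre (hf : IsUnimodalAlleeMap M Af Kf Bf f)
    (hdiff : ∀ x ∈ Ioo Bf (f Bf), DifferentiableAt ℝ f x)
    (hder : ∀ x ∈ Ioo Bf (f Bf), |deriv f x| < 1) :
    ∀ y ∈ Icc (0:ℝ) M, y ≤ f Bf → y ≠ Af → f y ≠ Af := by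
  intro y hy hyM hne hcontra
  have hA0 : (0:ℝ) < Af := hf.1
  have hAK : Af < Kf := hf.2.1
  have hAB : Af < Bf := hf.2.2.2.1
  have hBK : Bf < Kf := hf.2.2.2.2.1
  rcases lt_trichotomy y Af with h | h | h
  · rcases eq_or_lt_of_le hy.1 with h0 | h0
    · rw [← h0] at hcontra
      rw [hf.2.2.2.2.2.2.2.2.2.1] at hcontra
      exact absurd hcontra.symm (ne_of_gt hA0)
    · have : f y < y := hf.2.2.2.2.2.2.2.2.2.2.2.2.1 y (Or.inl ⟨h0, h⟩)
      linarith
  · exact hne h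
  · rcases lt_trichotomy y Kf with h2 | h2 | h2
    · have : y < f y := hf.2.2.2.2.2.2.2.2.2.2.2.2.2 y ⟨h, h2⟩
      linarith
    · rw [h2, hf.2.2.2.2.2.2.2.2.2.2.2.1] at hcontra
      exact absurd hcontra (ne_of_gt hAK)
    · have hptc := uam_ptcontr hf hdiff hder y (by linarith) hyM (ne_of_gt h2)
      rw [hcontra] at hptc
      rw [abs_of_neg (by linarith : Af - Kf < 0), abs_of_pos (by linarith : (0:ℝ) < y - Kf)] at hptc
      have hMK := uam_MK hf hdiff hder
      linarith

lemma uam_neverAf (hf : IsUnimodalAlleeMap M Af Kf Bf f)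
    (hdiff : ∀ x ∈ Ioo Bf (f Bf), DifferentiableAt ℝ f x)
    (hder : ∀ x ∈ Ioo Bf (f Bf), |deriv f x| < 1) :
    ∀ x ∈ Icc (0:ℝ) M, x ≠ Af → f x ≠ Af → ∀ n, f^[n] x ≠ Af := by
  intro x hx h0 h1 n
  induction n with
  | zero => simpa using h0
  | succ n ih =>
    cases n with
    | zero => simpa using h1
    | succ m =>
      rw [Function.iterate_succ_apply']
      refine uam_nopre hf hdiff hder _ (uam_iter_mem hf hx _) ?_ ih
      rw [Function.iterate_succ_apply']
      exact uam_max hf _ (uam_iter_mem hf hx m)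

end Det

def owStep (f g : ℝ → ℝ) (b : Bool) (x : ℝ) : ℝ := if b then f x else g x

def ow (f g : ℝ → ℝ) (w : List Bool) (x : ℝ) : ℝ := w.foldl (fun y b => owStep f g b y) x

section OW
variable {f g : ℝ → ℝ}

@[simp] lemma ow_nil (x : ℝ) : ow f g ([] : List Bool) x = x := rfl

lemma ow_cons (b : Bool) (w : List Bool) (x : ℝ) :
    ow f g (b :: w) x = ow f g w (owStep f g b x) := rfl

lemma ow_append (w₁ w₂ : List Bool) (x : ℝ) :
    ow f g (w₁ ++ w₂) x = ow f g w₂ (ow f g w₁ x) := List.foldl_append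

lemma ow_replicate (n : ℕ) (x : ℝ) : ow f g (List.replicate n true) x = f^[n] x := by
  induction n generalizing x with
  | zero => rfl
  | succ n ih =>
    rw [List.replicate_succ, ow_cons, Function.iterate_succ_apply]
    have : owStep f g true x = f x := rfl
    rw [this, ih]

lemma ow_mapsTo {S : Set ℝ} (hfm : Set.MapsTo f S S) (hgm : Set.MapsTo g S S) :
    ∀ w : List Bool, Set.MapsTo (ow f g w) S S := by
  intro w
  induction w with
  | nil => exact fun x hx => hx
  | cons b t ih =>
    intro x hx
    rw [ow_cons]
    apply ih
    cases b
    · exact hgm hx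
    · exact hfm hx

lemma ow_contOn {S : Set ℝ} (hfm : Set.MapsTo f S S) (hgm : Set.MapsTo g S S)
    (hfc : ContinuousOn f S) (hgc : ContinuousOn g S) :
    ∀ w : List Bool, ContinuousOn (ow f g w) S := by
  intro w
  induction w with
  | nil => exact continuousOn_id
  | cons b t ih =>
    have hstepc : ContinuousOn (owStep f g b) S := by cases b <;> simpa [owStep]
    have hstepm : Set.MapsTo (owStep f g b) S S := by
      intro x hx; cases b
      · exact hgm hx
      · exact hfm hx
    exact ih.comp hstepc hstepm

lemma ow_of_foldr :
    ∀ (l : List (ℝ → ℝ)), (∀ h ∈ l, h = f ∨ h = g) → ∀ x : ℝ,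
      ∃ w : List Bool, ow f g w x = l.foldr (· ∘ ·) id x := by
  intro l hl
  induction l with
  | nil => exact fun x => ⟨[], rfl⟩
  | cons h t ih =>
    intro x
    obtain ⟨w, hw⟩ := ih (fun h' hh' => hl h' (List.mem_cons_of_mem _ hh')) x
    rcases hl h List.mem_cons_self with rfl | rfl
    · refine ⟨w ++ [true], ?_⟩
      rw [ow_append, List.foldr_cons]
      simp only [ow, owStep] at hw
      simp [ow, owStep, hw]
    · refine ⟨w ++ [false], ?_⟩
      rw [ow_append, List.foldr_cons]
      simp only [ow, owStep] at hw
      simp [ow, owStep, hw]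

end OW

section Main
variable {M Af Kf Bf Ag Kg Bg : ℝ} {f g : ℝ → ℝ}

lemma near_K (hf : IsUnimodalAlleeMap M Af Kf Bf f) (hg : IsUnimodalAlleeMap M Ag Kg Bg g)
    (hcomp : ∃ l : List (ℝ → ℝ), l ≠ [] ∧ (∀ h ∈ l, h = f ∨ h = g) ∧
      l.foldr (· ∘ ·) id Kf < Af) :
    ∃ δ > (0:ℝ), ∀ y ∈ Icc (0:ℝ) M, |y - Kf| < δ → ∃ w : List Bool, ow f g w y < Af := by
  obtain ⟨l, _, hl, hlK⟩ := hcomp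
  obtain ⟨w₀, hw₀⟩ := ow_of_foldr l hl Kf
  have hK : Kf ∈ Icc (0:ℝ) M := ⟨le_of_lt (lt_trans hf.1 hf.2.1), hf.2.2.1⟩
  have hcont : ContinuousOn (ow f g w₀) (Icc (0:ℝ) M) :=
    ow_contOn hf.2.2.2.2.2.1 hg.2.2.2.2.2.1 hf.2.2.2.2.2.2.1 hg.2.2.2.2.2.2.1 w₀
  have hval : ow f g w₀ Kf < Af := by rw [hw₀]; exact hlK
  have h1 : (ow f g w₀) ⁻¹' (Iio Af) ∈ 𝓝[Icc (0:ℝ) M] Kf :=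
    hcont Kf hK (Iio_mem_nhds hval)
  rw [Metric.mem_nhdsWithin_iff] at h1
  obtain ⟨δ, hδ, hsub⟩ := h1
  refine ⟨δ, hδ, ?_⟩
  intro y hy hnear
  refine ⟨w₀, ?_⟩
  have : y ∈ Metric.ball Kf δ ∩ Icc (0:ℝ) M := ⟨by rwa [Metric.mem_ball, Real.dist_eq], hy⟩
  exact hsub this

lemma reach' (hf : IsUnimodalAlleeMap M Af Kf Bf f) (hg : IsUnimodalAlleeMap M Ag Kg Bg g)
    (hA : Ag < Af)
    (hdiff : ∀ x ∈ Ioo Bf (f Bf), DifferentiableAt ℝ f x)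
    (hder : ∀ x ∈ Ioo Bf (f Bf), |deriv f x| < 1)
    (hcomp : ∃ l : List (ℝ → ℝ), l ≠ [] ∧ (∀ h ∈ l, h = f ∨ h = g) ∧
      l.foldr (· ∘ ·) id Kf < Af) :
    ∀ x ∈ Icc (0:ℝ) M, x ≠ Af → f x ≠ Af → ∃ w : List Bool, ow f g w x < Ag := by
  obtain ⟨δ, hδ, hnear⟩ := near_K hf hg hcomp
  intro x hx hxA hfxA
  have hAg0 : 0 < Ag := hg.1
  by_cases h1 : ∃ n, f^[n] x < Af
  · obtain ⟨n, hn⟩ := h1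
    obtain ⟨m, hm⟩ := uam_decay hf Ag hAg0 (f^[n] x) (uam_iter_mem hf hx n).1 hn
    refine ⟨List.replicate (m+n) true, ?_⟩
    rw [ow_replicate, Function.iterate_add_apply]
    exact hm
  · push_neg at h1
    have hgt : ∀ n, Af < f^[n] x := fun n =>
      lt_of_le_of_ne (h1 n) (Ne.symm (uam_neverAf hf hdiff hder x hx hxA hfxA n))
    obtain ⟨n, hn⟩ := uam_incr hf x hx hgt
    obtain ⟨m, hm⟩ := uam_enter_ball hf hdiff hder δ hδ _ hn
    rw [← Function.iterate_add_apply] at hm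
    have hmem : f^[m+n] x ∈ Icc (0:ℝ) M := uam_iter_mem hf hx _
    obtain ⟨w₁, hw₁⟩ := hnear _ hmem hm
    have hzmem : ow f g w₁ (f^[m+n] x) ∈ Icc (0:ℝ) M :=
      ow_mapsTo hf.2.2.2.2.2.1 hg.2.2.2.2.2.1 w₁ hmem
    obtain ⟨k, hk⟩ := uam_decay hf Ag hAg0 _ hzmem.1 hw₁
    refine ⟨List.replicate (m+n) true ++ w₁ ++ List.replicate k true, ?_⟩
    rw [ow_append, ow_append, ow_replicate, ow_replicate]
    exact hk

lemma reach (hf : IsUnimodalAlleeMap M Af Kf Bf f) (hg : IsUnimodalAlleeMap M Ag Kg Bg g)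
    (hA : Ag < Af)
    (hdiff : ∀ x ∈ Ioo Bf (f Bf), DifferentiableAt ℝ f x)
    (hder : ∀ x ∈ Ioo Bf (f Bf), |deriv f x| < 1)
    (hcomp : ∃ l : List (ℝ → ℝ), l ≠ [] ∧ (∀ h ∈ l, h = f ∨ h = g) ∧
      l.foldr (· ∘ ·) id Kf < Af)
    (hfg : f (g Af) ≠ Af) :
    ∀ x ∈ Icc (0:ℝ) M, ∃ w : List Bool, ow f g w x < Ag := by
  intro x hx
  have hAmem : Af ∈ Icc (0:ℝ) M :=
    ⟨hf.1.le, le_of_lt (lt_of_lt_of_le (lt_trans hf.2.2.2.1 hf.2.2.2.2.1) hf.2.2.1)⟩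
  have hgA : g Af ∈ Icc (0:ℝ) M := hg.2.2.2.2.2.1 hAmem
  have hfgA : f (g Af) ∈ Icc (0:ℝ) M := hf.2.2.2.2.2.1 hgA
  have hle : f (g Af) ≤ f Bf := uam_max hf _ hgA
  have key : ∃ w', ow f g w' (f (g Af)) < Ag :=
    reach' hf hg hA hdiff hder hcomp _ hfgA hfg
      (uam_nopre hf hdiff hder _ hfgA hle hfg)
  by_cases hxA : x = Af
  · obtain ⟨w', hw'⟩ := key
    refine ⟨[false, true] ++ w', ?_⟩
    rw [ow_append]
    have : ow f g ([false, true]) x = f (g x) := rfl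
    rw [this, hxA]
    exact hw'
  · by_cases hfxA : f x = Af
    · obtain ⟨w', hw'⟩ := key
      refine ⟨[true, false, true] ++ w', ?_⟩
      rw [ow_append]
      have : ow f g ([true, false, true]) x = f (g (f x)) := rfl
      rw [this, hfxA]
      exact hw'
    · exact reach' hf hg hA hdiff hder hcomp x hx hxA hfxA

end Main

section Main2
variable {M Af Kf Bf Ag Kg Bg : ℝ} {f g : ℝ → ℝ}

lemma keep_low (hf : IsUnimodalAlleeMap M Af Kf Bf f) (hg : IsUnimodalAlleeMap M Ag Kg Bg g)
    (hA : Ag < Af) :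
    ∀ z : ℝ, 0 ≤ z → z < Ag → ∀ k, 0 ≤ f^[k] z ∧ f^[k] z < Ag := by
  have hAgM : Ag < M := lt_of_lt_of_le hg.2.1 hg.2.2.1
  intro z hz0 hzA k
  induction k with
  | zero => exact ⟨hz0, hzA⟩
  | succ k ih =>
    rw [Function.iterate_succ_apply']
    set y := f^[k] z
    have hymem : y ∈ Icc (0:ℝ) M := ⟨ih.1, by linarith [ih.2]⟩
    rcases eq_or_lt_of_le ih.1 with h0 | h0
    · rw [← h0, hf.2.2.2.2.2.2.2.2.2.1]
      exact ⟨le_rfl, hg.1⟩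
    · have hlt : f y < y := hf.2.2.2.2.2.2.2.2.2.2.2.2.1 y (Or.inl ⟨h0, by linarith [ih.2]⟩)
      exact ⟨(hf.2.2.2.2.2.1 hymem).1, by linarith [ih.2]⟩

lemma uniform_word (hf : IsUnimodalAlleeMap M Af Kf Bf f) (hg : IsUnimodalAlleeMap M Ag Kg Bg g)
    (hA : Ag < Af)
    (hdiff : ∀ x ∈ Ioo Bf (f Bf), DifferentiableAt ℝ f x)
    (hder : ∀ x ∈ Ioo Bf (f Bf), |deriv f x| < 1)
    (hcomp : ∃ l : List (ℝ → ℝ), l ≠ [] ∧ (∀ h ∈ l, h = f ∨ h = g) ∧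
      l.foldr (· ∘ ·) id Kf < Af)
    (hfg : f (g Af) ≠ Af) :
    ∃ N : ℕ, 0 < N ∧ ∀ x ∈ Icc (0:ℝ) M, ∃ w : List Bool,
      w.length = N ∧ ow f g w x < Ag := by
  classical
  have hreach := reach hf hg hA hdiff hder hcomp hfg
  set W : ℝ → List Bool := fun x => if hx : x ∈ Icc (0:ℝ) M then (hreach x hx).choose else []
    with hWdef
  have hW : ∀ x, ∀ hx : x ∈ Icc (0:ℝ) M, ow f g (W x) x < Ag := by
    intro x hx
    simp only [hWdef, dif_pos hx]
    exact (hreach x hx).choose_spec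
  have hV : ∀ x, ∀ hx : x ∈ Icc (0:ℝ) M, ∃ V : Set ℝ, IsOpen V ∧ x ∈ V ∧
      ∀ y ∈ V ∩ Icc (0:ℝ) M, ow f g (W x) y < Ag := by
    intro x hx
    have hcont := ow_contOn hf.2.2.2.2.2.1 hg.2.2.2.2.2.1
      hf.2.2.2.2.2.2.1 hg.2.2.2.2.2.2.1 (W x)
    have h1 : (ow f g (W x)) ⁻¹' (Iio Ag) ∈ 𝓝[Icc (0:ℝ) M] x :=
      hcont x hx (Iio_mem_nhds (hW x hx))
    rw [mem_nhdsWithin] at h1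
    obtain ⟨V, hVo, hxV, hsub⟩ := h1
    exact ⟨V, hVo, hxV, fun y hy => hsub hy⟩
  set V : ℝ → Set ℝ := fun x => if hx : x ∈ Icc (0:ℝ) M then (hV x hx).choose else univ
    with hVdef
  have hVnhds : ∀ x ∈ Icc (0:ℝ) M, V x ∈ 𝓝 x := by
    intro x hx
    simp only [hVdef, dif_pos hx]
    exact (hV x hx).choose_spec.1.mem_nhds (hV x hx).choose_spec.2.1
  obtain ⟨t, hts, htcover⟩ := isCompact_Icc.elim_nhds_subcover V hVnhds
  set N := (t.sup fun x => (W x).length) + 1 with hNdef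
  refine ⟨N, Nat.succ_pos _, ?_⟩
  intro y hy
  obtain ⟨x, hxt, hyV⟩ : ∃ x ∈ t, y ∈ V x := by
    have := htcover hy
    simpa using this
  have hxIcc : x ∈ Icc (0:ℝ) M := hts x hxt
  have hval : ow f g (W x) y < Ag := by
    have h2 := (hV x hxIcc).choose_spec.2.2 y
    apply h2
    constructor
    · have : V x = (hV x hxIcc).choose := by simp only [hVdef, dif_pos hxIcc]
      rwa [this] at hyV
    · exact hy
  have hlen : (W x).length ≤ N - 1 := by
    rw [hNdef]
    simpa using Finset.le_sup (f := fun x => (W x).length) hxt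
  refine ⟨W x ++ List.replicate (N - (W x).length) true, ?_, ?_⟩
  · rw [List.length_append, List.length_replicate]
    omega
  · rw [ow_append, ow_replicate]
    have hz0 : 0 ≤ ow f g (W x) y :=
      (ow_mapsTo hf.2.2.2.2.2.1 hg.2.2.2.2.2.1 (W x) hy).1
    exact (keep_low hf hg hA _ hz0 hval _).2

lemma extinct (hf : IsUnimodalAlleeMap M Af Kf Bf f) (hg : IsUnimodalAlleeMap M Ag Kg Bg g)
    (hA : Ag < Af) (y : ℕ → ℝ)
    (hstep : ∀ n, y (n+1) = f (y n) ∨ y (n+1) = g (y n))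
    (h0 : 0 ≤ y 0) (h1 : y 0 < Ag) : Tendsto y atTop (𝓝 0) := by
  have hAgM : Ag < M := lt_of_lt_of_le hg.2.1 hg.2.2.1
  have hinv : ∀ n, (0 ≤ y n ∧ y n < Ag) ∧ y (n+1) ≤ y n := by
    intro n
    induction n with
    | zero =>
      refine ⟨⟨h0, h1⟩, ?_⟩
      rcases eq_or_lt_of_le h0 with hz | hz
      · rcases hstep 0 with h | h <;> rw [h, ← hz]
        · rw [hf.2.2.2.2.2.2.2.2.2.1]
        · rw [hg.2.2.2.2.2.2.2.2.2.1]
      · rcases hstep 0 with h | h <;> rw [h]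
        · exact le_of_lt (hf.2.2.2.2.2.2.2.2.2.2.2.2.1 _ (Or.inl ⟨hz, by linarith⟩))
        · exact le_of_lt (hg.2.2.2.2.2.2.2.2.2.2.2.2.1 _ (Or.inl ⟨hz, h1⟩))
    | succ n ih =>
      have hy0 : 0 ≤ y (n+1) := by
        have hmem : y n ∈ Icc (0:ℝ) M := ⟨ih.1.1, by linarith [ih.1.2]⟩
        rcases hstep n with h | h <;> rw [h]
        · exact (hf.2.2.2.2.2.1 hmem).1
        · exact (hg.2.2.2.2.2.1 hmem).1
      have hyA : y (n+1) < Ag := lt_of_le_of_lt ih.2 ih.1.2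
      refine ⟨⟨hy0, hyA⟩, ?_⟩
      rcases eq_or_lt_of_le hy0 with hz | hz
      · rcases hstep (n+1) with h | h <;> rw [h, ← hz]
        · rw [hf.2.2.2.2.2.2.2.2.2.1]
        · rw [hg.2.2.2.2.2.2.2.2.2.1]
      · rcases hstep (n+1) with h | h <;> rw [h]
        · exact le_of_lt (hf.2.2.2.2.2.2.2.2.2.2.2.2.1 _ (Or.inl ⟨hz, by linarith⟩))
        · exact le_of_lt (hg.2.2.2.2.2.2.2.2.2.2.2.2.1 _ (Or.inl ⟨hz, hyA⟩))
  have hanti : Antitone y := antitone_nat_of_succ_le (fun n => (hinv n).2)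
  have hbdd : BddBelow (Set.range y) := ⟨0, by rintro z ⟨n, rfl⟩; exact (hinv n).1.1⟩
  have htend := tendsto_atTop_ciInf hanti hbdd
  set L := ⨅ n, y n with hLdef
  have hL0 : 0 ≤ L := le_ciInf (fun n => (hinv n).1.1)
  rcases eq_or_lt_of_le hL0 with hLz | hLz
  · rwa [← hLz] at htend
  · exfalso
    have hLy : L ≤ y 0 := ciInf_le hbdd 0
    have hLA : L < Ag := by linarith [h1]
    have hLmem : L ∈ Icc (0:ℝ) M := ⟨hL0, by linarith⟩
    have hfL : f L < L := hf.2.2.2.2.2.2.2.2.2.2.2.2.1 L (Or.inl ⟨hLz, by linarith⟩)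
    have hgL : g L < L := hg.2.2.2.2.2.2.2.2.2.2.2.2.1 L (Or.inl ⟨hLz, hLA⟩)
    have hev : {z : ℝ | f z < L} ∩ {z : ℝ | g z < L} ∈ 𝓝[Icc (0:ℝ) M] L := by
      apply inter_mem
      · exact hf.2.2.2.2.2.2.1 L hLmem (Iio_mem_nhds hfL)
      · exact hg.2.2.2.2.2.2.1 L hLmem (Iio_mem_nhds hgL)
    have htend' : Tendsto y atTop (𝓝[Icc (0:ℝ) M] L) :=
      tendsto_nhdsWithin_of_tendsto_nhds_of_eventually_within _ htend
        (Eventually.of_forall (fun n => ⟨(hinv n).1.1, by linarith [(hinv n).1.2]⟩))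
    obtain ⟨n, hn⟩ := (htend'.eventually hev).exists
    have hge : L ≤ y (n+1) := ciInf_le hbdd (n+1)
    rcases hstep n with h | h
    · rw [h] at hge; exact absurd hn.1 (not_lt.mpr hge)
    · rw [h] at hge; exact absurd hn.2 (not_lt.mpr hge)

end Main2


noncomputable def coinP (p : ℝ) (b : Bool) : ENNReal :=
  if b then ENNReal.ofReal p else ENNReal.ofReal (1-p)

def cylF (n : ℕ) (s : Fin n → Bool) : Set (ℕ → Bool) := {ω | ∀ i : Fin n, ω i = s i}

def blockF (t n : ℕ) (u : Fin n → Bool) : Set (ℕ → Bool) := {ω | ∀ i : Fin n, ω (t + i) = u i}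

def extF (n : ℕ) (s : Fin n → Bool) : ℕ → Bool := fun j => if h : j < n then s ⟨j, h⟩ else true

section Prob
attribute [local instance] Classical.propDecidable
variable {p : ℝ} {μ : Measure (ℕ → Bool)}

lemma measurable_coord (n : ℕ) (b : Bool) : MeasurableSet {ω : ℕ → Bool | ω n = b} := by
  have : {ω : ℕ → Bool | ω n = b} = (fun ω : ℕ → Bool => ω n) ⁻¹' {b} := by
    ext ω; simp
  rw [this]
  exact (measurable_pi_apply n) (measurableSet_singleton b)

lemma cylF_measurable (n : ℕ) (s : Fin n → Bool) : MeasurableSet (cylF n s) := by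
  have : cylF n s = ⋂ i : Fin n, {ω : ℕ → Bool | ω i = s i} := by
    ext ω; simp [cylF]
  rw [this]
  exact MeasurableSet.iInter (fun i => measurable_coord i (s i))

lemma blockF_measurable (t n : ℕ) (u : Fin n → Bool) : MeasurableSet (blockF t n u) := by
  have : blockF t n u = ⋂ i : Fin n, {ω : ℕ → Bool | ω (t + i) = u i} := by
    ext ω; simp [blockF]
  rw [this]
  exact MeasurableSet.iInter (fun i => measurable_coord _ (u i))

lemma meas_coin [IsProbabilityMeasure μ] (hp : p ∈ Ioo (0:ℝ) 1)
    (hcoin : ∀ n, μ {ω | ω n = true} = ENNReal.ofReal p) :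
    ∀ n b, μ {ω : ℕ → Bool | ω n = b} = coinP p b := by
  intro n b
  cases b
  · have hcompl : {ω : ℕ → Bool | ω n = false} = {ω : ℕ → Bool | ω n = true}ᶜ := by
      ext ω; simp
    rw [hcompl, prob_compl_eq_one_sub (measurable_coord n true), hcoin n]
    show _ = ENNReal.ofReal (1-p)
    rw [ENNReal.ofReal_sub 1 hp.1.le, ENNReal.ofReal_one]
  · rw [hcoin n]; rfl

lemma meas_eqOn [IsProbabilityMeasure μ]
    (hindep : iIndepFun (fun n (ω : ℕ → Bool) => ω n) μ)
    (T : Finset ℕ) (v : ℕ → Bool) :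
    μ {ω | ∀ i ∈ T, ω i = v i} = ∏ i ∈ T, μ {ω : ℕ → Bool | ω i = v i} := by
  have h := hindep.measure_inter_preimage_eq_mul (sets := fun i => {v i}) T
    (fun i _ => measurableSet_singleton _)
  have hset : {ω : ℕ → Bool | ∀ i ∈ T, ω i = v i}
      = ⋂ i ∈ T, (fun ω : ℕ → Bool => ω i) ⁻¹' {v i} := by
    ext ω; simp
  have hfac : ∀ i, (fun ω : ℕ → Bool => ω i) ⁻¹' {v i} = {ω : ℕ → Bool | ω i = v i} := by
    intro i; ext ω; simp
  rw [hset, h]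
  exact Finset.prod_congr rfl (fun i _ => by rw [hfac])

lemma meas_cylF [IsProbabilityMeasure μ] (hp : p ∈ Ioo (0:ℝ) 1)
    (hindep : iIndepFun (fun n (ω : ℕ → Bool) => ω n) μ)
    (hcoin : ∀ n, μ {ω | ω n = true} = ENNReal.ofReal p)
    (n : ℕ) (s : Fin n → Bool) :
    μ (cylF n s) = ∏ i : Fin n, coinP p (s i) := by
  have hset : cylF n s = {ω : ℕ → Bool | ∀ j ∈ Finset.range n, ω j = extF n s j} := by
    ext ω
    simp only [cylF, mem_setOf_eq, Finset.mem_range, extF]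
    constructor
    · intro h j hj; rw [dif_pos hj]; exact h ⟨j, hj⟩
    · intro h i; have := h i i.isLt; rwa [dif_pos i.isLt] at this
  rw [hset, meas_eqOn hindep]
  have h1 : ∀ j ∈ Finset.range n, μ {ω : ℕ → Bool | ω j = extF n s j} = coinP p (extF n s j) :=
    fun j _ => meas_coin hp hcoin j _
  rw [Finset.prod_congr rfl h1, ← Fin.prod_univ_eq_prod_range (fun j => coinP p (extF n s j)) n]
  exact Finset.prod_congr rfl (fun i _ => by rw [extF, dif_pos i.isLt])

lemma meas_cyl_block [IsProbabilityMeasure μ] (hp : p ∈ Ioo (0:ℝ) 1)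
    (hindep : iIndepFun (fun n (ω : ℕ → Bool) => ω n) μ)
    (hcoin : ∀ n, μ {ω | ω n = true} = ENNReal.ofReal p)
    (t n : ℕ) (s : Fin t → Bool) (u : Fin n → Bool) :
    μ (cylF t s ∩ blockF t n u) = (∏ i : Fin t, coinP p (s i)) * ∏ i : Fin n, coinP p (u i) := by
  set v : ℕ → Bool := fun j => if h : j < t then s ⟨j, h⟩
    else if h2 : j - t < n then u ⟨j - t, h2⟩ else true with hv
  have hseteq : cylF t s ∩ blockF t n u = {ω | ∀ j ∈ Finset.range (t+n), ω j = v j} := by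
    ext ω
    simp only [cylF, blockF, mem_inter_iff, mem_setOf_eq, Finset.mem_range]
    constructor
    · rintro ⟨h1, h2⟩ j hj
      by_cases hjt : j < t
      · rw [hv]; simp only [dif_pos hjt]; exact h1 ⟨j, hjt⟩
      · have hjn : j - t < n := by omega
        rw [hv]; simp only [dif_neg hjt, dif_pos hjn]
        have h3 := h2 ⟨j - t, hjn⟩
        have h4 : t + (j - t) = j := by omega
        rw [h4] at h3
        exact h3
    · intro h
      constructor
      · intro i
        have h3 := h i (by omega)
        rw [hv] at h3; simp only [dif_pos i.isLt] at h3
        exact h3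
      · intro i
        have h3 := h (t + i) (by omega)
        rw [hv] at h3
        have h4 : ¬ (t + (i:ℕ) < t) := by omega
        have h5 : t + (i:ℕ) - t < n := by omega
        simp only [dif_neg h4, dif_pos h5] at h3
        have h6 : (⟨t + (i:ℕ) - t, h5⟩ : Fin n) = i := by
          apply Fin.ext; simp
        rwa [h6] at h3
  rw [hseteq, meas_eqOn hindep]
  have h1 : ∀ j ∈ Finset.range (t+n), μ {ω : ℕ → Bool | ω j = v j} = coinP p (v j) :=
    fun j _ => meas_coin hp hcoin j _
  rw [Finset.prod_congr rfl h1, Finset.prod_range_add]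
  congr 1
  · rw [← Fin.prod_univ_eq_prod_range (fun j => coinP p (v j)) t]
    refine Finset.prod_congr rfl (fun i _ => ?_)
    rw [hv]; simp only [dif_pos i.isLt]
  · rw [← Fin.prod_univ_eq_prod_range (fun j => coinP p (v (t + j))) n]
    refine Finset.prod_congr rfl (fun i _ => ?_)
    rw [hv]
    have h4 : ¬ (t + (i:ℕ) < t) := by omega
    have h5 : t + (i:ℕ) - t < n := by omega
    simp only [dif_neg h4, dif_pos h5]
    have h6 : (⟨t + (i:ℕ) - t, h5⟩ : Fin n) = i := by apply Fin.ext; simp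
    rw [h6]

lemma coin_sum_one (hp : p ∈ Ioo (0:ℝ) 1) : coinP p true + coinP p false = 1 := by
  show ENNReal.ofReal p + ENNReal.ofReal (1-p) = 1
  rw [← ENNReal.ofReal_add hp.1.le (by linarith [hp.2] : (0:ℝ) ≤ 1 - p)]
  norm_num

lemma allsum (hp : p ∈ Ioo (0:ℝ) 1) :
    ∀ N : ℕ, ∑ u : Fin N → Bool, ∏ i : Fin N, coinP p (u i) = 1 := by
  intro N
  induction N with
  | zero => simp
  | succ N ih =>
    rw [← Equiv.sum_comp (Fin.consEquiv (fun _ : Fin (N+1) => Bool))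
      (fun u : Fin (N+1) → Bool => ∏ i, coinP p (u i))]
    have hcons : ∀ (z : Bool × (Fin N → Bool)),
        (∏ i : Fin (N+1), coinP p (((Fin.consEquiv (fun _ : Fin (N+1) => Bool)) z) i))
          = coinP p z.1 * ∏ i : Fin N, coinP p (z.2 i) := by
      rintro ⟨b, v⟩
      rw [Fin.prod_univ_succ]
      have h0 : ((Fin.consEquiv (fun _ : Fin (N+1) => Bool)) (b, v)) 0 = b := by simp [Fin.consEquiv]
      have hs : ∀ i : Fin N, ((Fin.consEquiv (fun _ : Fin (N+1) => Bool)) (b, v)) i.succ = v i := by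
        intro i; simp [Fin.consEquiv]
      rw [h0]
      exact congrArg _ (Finset.prod_congr rfl (fun i _ => by rw [hs i]))
    rw [Finset.sum_congr rfl (fun z _ => hcons z)]
    rw [Fintype.sum_prod_type]
    have : ∀ b : Bool, ∑ v : Fin N → Bool, coinP p b * ∏ i, coinP p (v i)
        = coinP p b := by
      intro b
      rw [← Finset.mul_sum, ih, mul_one]
    rw [Finset.sum_congr rfl (fun b _ => this b)]
    rw [Fintype.sum_bool]
    exact coin_sum_one hp

lemma cylF_disjoint {n : ℕ} {s s' : Fin n → Bool} (h : s ≠ s') :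
    Disjoint (cylF n s) (cylF n s') := by
  rw [Set.disjoint_iff]
  rintro ω ⟨h1, h2⟩
  exfalso
  apply h
  funext i
  rw [← h1 i, ← h2 i]

lemma blockF_disjoint {t n : ℕ} {u u' : Fin n → Bool} (h : u ≠ u') :
    Disjoint (blockF t n u) (blockF t n u') := by
  rw [Set.disjoint_iff]
  rintro ω ⟨h1, h2⟩
  exfalso
  apply h
  funext i
  rw [← h1 i, ← h2 i]

lemma mem_cylF_self (n : ℕ) (ω : ℕ → Bool) : ω ∈ cylF n (fun i : Fin n => ω i) :=
  fun _ => rfl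

lemma cylF_agree {n : ℕ} {s : Fin n → Bool} {ω : ℕ → Bool} (hω : ω ∈ cylF n s) :
    ∀ i < n, ω i = extF n s i := by
  intro i hi
  rw [extF, dif_pos hi]
  exact hω ⟨i, hi⟩

lemma dep_pieces {A : Set (ℕ → Bool)} {n : ℕ}
    (hdep : ∀ ω ω', (∀ i < n, ω i = ω' i) → (ω ∈ A ↔ ω' ∈ A)) (s : Fin n → Bool) :
    cylF n s ∩ A = if extF n s ∈ A then cylF n s else ∅ := by
  by_cases h : extF n s ∈ A
  · rw [if_pos h]
    apply Set.eq_of_subset_of_subset inter_subset_left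
    intro ω hω
    exact ⟨hω, (hdep ω (extF n s) (cylF_agree hω)).mpr h⟩
  · rw [if_neg h]
    rw [Set.eq_empty_iff_forall_notMem]
    rintro ω ⟨h1, h2⟩
    exact h ((hdep ω (extF n s) (cylF_agree h1)).mp h2)

lemma meas_decomp {A : Set (ℕ → Bool)} {n : ℕ}
    (hdep : ∀ ω ω', (∀ i < n, ω i = ω' i) → (ω ∈ A ↔ ω' ∈ A)) :
    μ A = ∑ s : Fin n → Bool, μ (cylF n s ∩ A) := by
  have hcover : A = ⋃ s : Fin n → Bool, cylF n s ∩ A := by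
    apply Set.eq_of_subset_of_subset
    · intro ω hω
      exact Set.mem_iUnion.mpr ⟨fun i : Fin n => ω i, mem_cylF_self n ω, hω⟩
    · intro ω hω
      obtain ⟨s, hs⟩ := Set.mem_iUnion.mp hω
      exact hs.2
  have hdisj : Pairwise (Function.onFun Disjoint (fun s : Fin n → Bool => cylF n s ∩ A)) :=
    fun s s' hss' => Disjoint.mono inter_subset_left inter_subset_left (cylF_disjoint hss')
  have hmeas : ∀ s : Fin n → Bool, MeasurableSet (cylF n s ∩ A) := by
    intro s
    rw [dep_pieces hdep s]
    by_cases h : extF n s ∈ A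
    · rw [if_pos h]; exact cylF_measurable n s
    · rw [if_neg h]; exact MeasurableSet.empty
  conv_lhs => rw [hcover]
  rw [measure_iUnion hdisj hmeas, tsum_fintype]

lemma cover_any (t : ℕ) (C : Set (ℕ → Bool)) : C = ⋃ s : Fin t → Bool, cylF t s ∩ C := by
  apply Set.eq_of_subset_of_subset
  · intro ω hω
    exact Set.mem_iUnion.mpr ⟨fun i : Fin t => ω i, mem_cylF_self t ω, hω⟩
  · intro ω hω
    obtain ⟨s, hs⟩ := Set.mem_iUnion.mp hω
    exact hs.2

lemma step_bound [IsProbabilityMeasure μ] (hp : p ∈ Ioo (0:ℝ) 1)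
    (hindep : iIndepFun (fun n (ω : ℕ → Bool) => ω n) μ)
    (hcoin : ∀ n, μ {ω | ω n = true} = ENNReal.ofReal p)
    {A : Set (ℕ → Bool)} {t : ℕ}
    (hdep : ∀ ω ω', (∀ i < t, ω i = ω' i) → (ω ∈ A ↔ ω' ∈ A))
    {N : ℕ} (φ : (ℕ → Bool) → Fin N → Bool)
    (hφ : ∀ ω ω', (∀ i < t, ω i = ω' i) → φ ω = φ ω') :
    μ (A ∩ {ω | ¬ ∀ i : Fin N, ω (t + i) = φ ω i})
      ≤ μ A * (1 - (ENNReal.ofReal (min p (1-p)))^N) := by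
  set δ : ENNReal := ENNReal.ofReal (min p (1-p)) with hδ
  set r : ENNReal := 1 - δ^N with hr
  set Pb : (Fin N → Bool) → ENNReal := fun u => ∏ i : Fin N, coinP p (u i) with hPb
  have hbp : ∀ u : Fin N → Bool, δ^N ≤ Pb u := by
    intro u
    rw [hPb]
    have : δ^N = ∏ _i : Fin N, δ := by
      rw [Finset.prod_const, Finset.card_univ, Fintype.card_fin]
    rw [this]
    apply Finset.prod_le_prod'
    intro i _
    cases u i
    · exact ENNReal.ofReal_le_ofReal (min_le_right _ _)
    · exact ENNReal.ofReal_le_ofReal (min_le_left _ _)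
  have hPb_one : ∀ u, Pb u ≤ 1 := by
    intro u
    rw [← allsum hp N]
    exact Finset.single_le_sum (fun u _ => zero_le) (Finset.mem_univ u)
  have herase : ∀ u₀ : Fin N → Bool, ∑ u ∈ Finset.univ.erase u₀, Pb u = 1 - Pb u₀ := by
    intro u₀
    have h := Finset.add_sum_erase Finset.univ Pb (Finset.mem_univ u₀)
    rw [allsum hp N] at h
    exact ENNReal.eq_sub_of_add_eq (ne_top_of_le_ne_top ENNReal.one_ne_top (hPb_one u₀))
      (by rw [add_comm] at h; exact h)
  set B := A ∩ {ω | ¬ ∀ i : Fin N, ω (t + i) = φ ω i} with hB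
  -- pieces
  have hpiece : ∀ s : Fin t → Bool, cylF t s ∩ B
      = if extF t s ∈ A then
          ⋃ u ∈ Finset.univ.erase (φ (extF t s)), cylF t s ∩ blockF t N u
        else (∅ : Set (ℕ → Bool)) := by
    intro s
    by_cases h : extF t s ∈ A
    · rw [if_pos h]
      ext ω
      simp only [hB, mem_inter_iff, mem_setOf_eq, Set.mem_iUnion, Finset.mem_erase,
        Finset.mem_univ, and_true, exists_prop]
      constructor
      · rintro ⟨hcyl, _, hbad⟩
        have hagree := cylF_agree hcyl
        have hφeq : φ ω = φ (extF t s) := hφ _ _ hagree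
        refine ⟨fun i => ω (t + i), ?_, hcyl, fun i => rfl⟩
        intro hcontra
        apply hbad
        intro i
        rw [hφeq, ← hcontra]
      · rintro ⟨u, hu, hcyl, hblock⟩
        have hagree := cylF_agree hcyl
        have hφeq : φ ω = φ (extF t s) := hφ _ _ hagree
        refine ⟨hcyl, (hdep _ _ hagree).mpr h, ?_⟩
        intro hcontra
        apply hu
        funext i
        rw [← hblock i, hcontra i, hφeq]
    · rw [if_neg h]
      rw [Set.eq_empty_iff_forall_notMem]
      rintro ω ⟨hcyl, hA', _⟩
      exact h ((hdep _ _ (cylF_agree hcyl)).mp hA')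
  have hmeas_piece : ∀ s : Fin t → Bool, μ (cylF t s ∩ B)
      ≤ (if extF t s ∈ A then μ (cylF t s) else 0) * r := by
    intro s
    rw [hpiece s]
    by_cases h : extF t s ∈ A
    · rw [if_pos h, if_pos h]
      rw [measure_biUnion_finset]
      · have hval : ∀ u ∈ Finset.univ.erase (φ (extF t s)),
            μ (cylF t s ∩ blockF t N u) = μ (cylF t s) * Pb u := by
          intro u _
          rw [meas_cyl_block hp hindep hcoin, meas_cylF hp hindep hcoin]
        rw [Finset.sum_congr rfl hval, ← Finset.mul_sum, herase]
        exact mul_le_mul_right (tsub_le_tsub_left (hbp _) 1) _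
      · intro u hu u' hu' huu'
        exact Disjoint.mono inter_subset_right inter_subset_right (blockF_disjoint huu')
      · intro u _
        exact (cylF_measurable t s).inter (blockF_measurable t N u)
    · rw [if_neg h, if_neg h, measure_empty, zero_mul]
  -- sum up
  have hcoverB := cover_any t B
  have hdisjB : Pairwise (Function.onFun Disjoint (fun s : Fin t → Bool => cylF t s ∩ B)) :=
    fun s s' hss' => Disjoint.mono inter_subset_left inter_subset_left (cylF_disjoint hss')
  have hmeasB : ∀ s : Fin t → Bool, MeasurableSet (cylF t s ∩ B) := by
    intro s
    rw [hpiece s]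
    by_cases h : extF t s ∈ A
    · rw [if_pos h]
      exact MeasurableSet.biUnion (Finset.countable_toSet _)
        (fun u _ => (cylF_measurable t s).inter (blockF_measurable t N u))
    · rw [if_neg h]; exact MeasurableSet.empty
  have hμB : μ B = ∑ s : Fin t → Bool, μ (cylF t s ∩ B) := by
    conv_lhs => rw [hcoverB]
    rw [measure_iUnion hdisjB hmeasB, tsum_fintype]
  have hμA : μ A = ∑ s : Fin t → Bool, (if extF t s ∈ A then μ (cylF t s) else 0) := by
    rw [meas_decomp hdep]
    refine Finset.sum_congr rfl (fun s _ => ?_)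
    rw [dep_pieces hdep s]
    by_cases h : extF t s ∈ A
    · rw [if_pos h, if_pos h]
    · rw [if_neg h, if_neg h, measure_empty]
  calc μ B = ∑ s : Fin t → Bool, μ (cylF t s ∩ B) := hμB
  _ ≤ ∑ s : Fin t → Bool, (if extF t s ∈ A then μ (cylF t s) else 0) * r :=
      Finset.sum_le_sum (fun s _ => hmeas_piece s)
  _ = (∑ s : Fin t → Bool, (if extF t s ∈ A then μ (cylF t s) else 0)) * r :=
      (Finset.sum_mul _ _ _).symm
  _ = μ A * r := by rw [← hμA]



section RO
variable {f g : ℝ → ℝ} {x₀ : ℝ} {M : ℝ}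

lemma randOrbit_dep : ∀ t (ω ω' : ℕ → Bool), (∀ i < t, ω i = ω' i) →
    randOrbit f g x₀ t ω = randOrbit f g x₀ t ω' := by
  intro t
  induction t with
  | zero => intro ω ω' _; rfl
  | succ t ih =>
    intro ω ω' h
    have h1 := ih ω ω' (fun i hi => h i (Nat.lt_succ_of_lt hi))
    show (if ω t then f (randOrbit f g x₀ t ω) else g (randOrbit f g x₀ t ω)) = _
    rw [h t (Nat.lt_succ_self t), h1]
    rfl

lemma randOrbit_ow (t : ℕ) : ∀ (n : ℕ) (ω : ℕ → Bool),
    randOrbit f g x₀ (t + n) ω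
      = ow f g (List.ofFn fun i : Fin n => ω (t + i)) (randOrbit f g x₀ t ω) := by
  intro n
  induction n with
  | zero => intro ω; simp
  | succ n ih =>
    intro ω
    have h1 : randOrbit f g x₀ (t + (n+1)) ω
        = owStep f g (ω (t + n)) (randOrbit f g x₀ (t + n) ω) := rfl
    rw [h1, ih ω]
    conv_rhs => rw [List.ofFn_succ', List.concat_eq_append, ow_append]
    have hsingle : ∀ (b : Bool) (y : ℝ), ow f g ([b]) y = owStep f g b y := fun b y => rfl
    rw [hsingle]
    have hlast : (Fin.last n : ℕ) = n := Fin.val_last n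
    rw [hlast]
    have hlists : (List.ofFn fun i : Fin n => ω (t + (Fin.castSucc i : ℕ)))
        = List.ofFn fun i : Fin n => ω (t + i) :=
      congrArg List.ofFn (funext fun i => by rw [Fin.coe_castSucc])
    rw [hlists]

lemma randOrbit_mem (hfm : MapsTo f (Icc (0:ℝ) M) (Icc 0 M))
    (hgm : MapsTo g (Icc (0:ℝ) M) (Icc 0 M)) (hx₀ : x₀ ∈ Icc (0:ℝ) M) :
    ∀ n ω, randOrbit f g x₀ n ω ∈ Icc (0:ℝ) M := by
  intro n ω
  induction n with
  | zero => exact hx₀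
  | succ n ih =>
    by_cases h : ω n
    · show (if ω n then f (randOrbit f g x₀ n ω) else g (randOrbit f g x₀ n ω)) ∈ _
      rw [if_pos h]; exact hfm ih
    · show (if ω n then f (randOrbit f g x₀ n ω) else g (randOrbit f g x₀ n ω)) ∈ _
      rw [if_neg h]; exact hgm ih

lemma randOrbit_step (n : ℕ) (ω : ℕ → Bool) :
    randOrbit f g x₀ (n+1) ω = f (randOrbit f g x₀ n ω)
      ∨ randOrbit f g x₀ (n+1) ω = g (randOrbit f g x₀ n ω) := by
  by_cases h : ω n
  · left
    show (if ω n then f (randOrbit f g x₀ n ω) else g (randOrbit f g x₀ n ω)) = _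
    rw [if_pos h]
  · right
    show (if ω n then f (randOrbit f g x₀ n ω) else g (randOrbit f g x₀ n ω)) = _
    rw [if_neg h]

end RO

def badSet (f g : ℝ → ℝ) (x₀ : ℝ) (ws : ℝ → ℕ → Bool) (N : ℕ) (k : ℕ) : Set (ℕ → Bool) :=
  {ω | ∀ j < k, ¬ ∀ i : Fin N, ω (j*N + i) = ws (randOrbit f g x₀ (j*N) ω) i}

section BS
variable {f g : ℝ → ℝ} {x₀ : ℝ} {ws : ℝ → ℕ → Bool} {N : ℕ}

lemma idx_lt {j k i N : ℕ} (hj : j < k) (hi : i < N) : j*N + i < k*N := by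
  have h1 : j*N + i < (j+1)*N := by
    have : (j+1)*N = j*N + N := by ring
    omega
  have h2 : (j+1)*N ≤ k*N := Nat.mul_le_mul_right N hj
  omega

lemma badSet_dep (k : ℕ) : ∀ ω ω', (∀ i < k*N, ω i = ω' i) →
    (ω ∈ badSet f g x₀ ws N k ↔ ω' ∈ badSet f g x₀ ws N k) := by
  have key : ∀ ω ω', (∀ i < k*N, ω i = ω' i) →
      ω ∈ badSet f g x₀ ws N k → ω' ∈ badSet f g x₀ ws N k := by
    intro ω ω' h hmem j hj hcontra
    apply hmem j hj
    intro i
    have hcoord : ω (j*N + i) = ω' (j*N + i) := h _ (idx_lt hj i.isLt)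
    have horb : randOrbit f g x₀ (j*N) ω = randOrbit f g x₀ (j*N) ω' :=
      randOrbit_dep (j*N) ω ω' (fun i hi => h i
        (lt_of_lt_of_le hi (Nat.mul_le_mul_right N hj.le)))
    rw [hcoord, horb]
    exact hcontra i
  intro ω ω' h
  exact ⟨key ω ω' h, key ω' ω (fun i hi => (h i hi).symm)⟩

lemma badSet_succ (k : ℕ) : badSet f g x₀ ws N (k+1) = badSet f g x₀ ws N k
    ∩ {ω | ¬ ∀ i : Fin N, ω (k*N + i) = ws (randOrbit f g x₀ (k*N) ω) i} := by
  ext ω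
  simp only [badSet, mem_inter_iff, mem_setOf_eq]
  constructor
  · intro h
    exact ⟨fun j hj => h j (Nat.lt_succ_of_lt hj), h k (Nat.lt_succ_self k)⟩
  · rintro ⟨h1, h2⟩ j hj
    rcases Nat.lt_succ_iff_lt_or_eq.mp hj with h | rfl
    exacts [h1 j h, h2]

lemma bad_bound {p : ℝ} {μ : Measure (ℕ → Bool)} [IsProbabilityMeasure μ]
    (hp : p ∈ Ioo (0:ℝ) 1)
    (hindep : iIndepFun (fun n (ω : ℕ → Bool) => ω n) μ)
    (hcoin : ∀ n, μ {ω | ω n = true} = ENNReal.ofReal p) :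
    ∀ k, μ (badSet f g x₀ ws N k) ≤ (1 - (ENNReal.ofReal (min p (1-p)))^N)^k := by
  intro k
  induction k with
  | zero => rw [pow_zero]; exact prob_le_one
  | succ k ih =>
    rw [badSet_succ, pow_succ]
    have hst := step_bound hp hindep hcoin (A := badSet f g x₀ ws N k) (t := k*N)
      (badSet_dep k)
      (φ := fun ω => fun i : Fin N => ws (randOrbit f g x₀ (k*N) ω) i)
      (fun ω ω' h => by
        have heq := randOrbit_dep (f := f) (g := g) (x₀ := x₀) (k*N) ω ω' h
        funext i
        show ws (randOrbit f g x₀ (k*N) ω) i = ws (randOrbit f g x₀ (k*N) ω') i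
        rw [heq])
    exact le_trans hst (mul_le_mul_left ih _)

end BS

lemma ofFn_getD {l : List Bool} {N : ℕ} (h : l.length = N) :
    List.ofFn (fun i : Fin N => l.getD i true) = l := by
  apply List.ext_getElem
  · simp [h]
  · intro n h1 h2
    simp only [List.getElem_ofFn]
    exact List.getD_eq_getElem l true h2


theorem stmt10
    (M Af Kf Bf Ag Kg Bg : ℝ)
    (f g : ℝ → ℝ)
    (hM : M = max (f Bf) (g Bg))
    (hf : IsUnimodalAlleeMap M Af Kf Bf f) (hg : IsUnimodalAlleeMap M Ag Kg Bg g)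
    (hA : Ag < Af)
    -- `f` is differentiable with `|f'| < 1` on `(B_f, M_f)`
    (hdiff : ∀ x ∈ Ioo Bf (f Bf), DifferentiableAt ℝ f x)
    (hder : ∀ x ∈ Ioo Bf (f Bf), |deriv f x| < 1)
    -- some composition of the maps `f`, `g` sends `K_f` below `A_f`
    (hcomp : ∃ l : List (ℝ → ℝ), l ≠ [] ∧ (∀ h ∈ l, h = f ∨ h = g) ∧
      l.foldr (· ∘ ·) id Kf < Af)
    (hfg : f (g Af) ≠ Af)
    (p : ℝ) (hp : p ∈ Ioo (0 : ℝ) 1)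
    (μ : Measure (ℕ → Bool)) [IsProbabilityMeasure μ]
    (hindep : iIndepFun (fun n ω => ω n) μ)
    (hcoin : ∀ n, μ {ω | ω n = true} = ENNReal.ofReal p) :
    ∀ x₀ ∈ Icc (0 : ℝ) M,
      μ {ω | Tendsto (fun n => randOrbit f g x₀ n ω) atTop (nhds 0)} = 1 := by
  classical
  intro x₀ hx₀
  obtain ⟨N, hN, huni⟩ := uniform_word hf hg hA hdiff hder hcomp hfg
  set word : ℝ → List Bool :=
    fun x => if hx : x ∈ Icc (0:ℝ) M then (huni x hx).choose else List.replicate N true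
    with hword
  have hwlen : ∀ x, ∀ _ : x ∈ Icc (0:ℝ) M, (word x).length = N := by
    intro x hx
    simp only [hword, dif_pos hx]
    exact (huni x hx).choose_spec.1
  have hwval : ∀ x, ∀ _ : x ∈ Icc (0:ℝ) M, ow f g (word x) x < Ag := by
    intro x hx
    simp only [hword, dif_pos hx]
    exact (huni x hx).choose_spec.2
  set ws : ℝ → ℕ → Bool := fun x i => (word x).getD i true with hws
  have hwsval : ∀ x, ∀ _ : x ∈ Icc (0:ℝ) M,
      ow f g (List.ofFn fun i : Fin N => ws x i) x < Ag := by
    intro x hx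
    have h1 : List.ofFn (fun i : Fin N => ws x i) = word x := ofFn_getD (hwlen x hx)
    rw [h1]
    exact hwval x hx
  -- the bad sets have small measure
  set T : Set (ℕ → Bool) := {ω | Tendsto (fun n => randOrbit f g x₀ n ω) atTop (nhds 0)}
    with hT
  have hδpos : (0:ENNReal) < ENNReal.ofReal (min p (1-p)) := by
    rw [ENNReal.ofReal_pos]
    exact lt_min hp.1 (by linarith [hp.2])
  have hrlt : (1 : ENNReal) - (ENNReal.ofReal (min p (1-p)))^N < 1 := by
    apply ENNReal.sub_lt_self ENNReal.one_ne_top one_ne_zero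
    exact pow_ne_zero N (ne_of_gt hδpos)
  have hzero : μ (⋂ k, badSet f g x₀ ws N k) = 0 := by
    have hle : ∀ k, μ (⋂ k, badSet f g x₀ ws N k)
        ≤ (1 - (ENNReal.ofReal (min p (1-p)))^N)^k := fun k =>
      le_trans (measure_mono (Set.iInter_subset _ k)) (bad_bound hp hindep hcoin k)
    have htendr := ENNReal.tendsto_pow_atTop_nhds_zero_of_lt_one hrlt
    have := ge_of_tendsto htendr (Eventually.of_forall hle)
    exact le_antisymm this zero_le
  -- inclusion of the complement
  have hincl : Tᶜ ⊆ ⋂ k, badSet f g x₀ ws N k := by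
    intro ω hω
    rw [Set.mem_iInter]
    intro k
    by_contra hbad
    apply hω
    simp only [badSet, mem_setOf_eq] at hbad
    push_neg at hbad
    obtain ⟨j, hj, hgood⟩ := hbad
    have hmemX : ∀ n, randOrbit f g x₀ n ω ∈ Icc (0:ℝ) M :=
      fun n => randOrbit_mem hf.2.2.2.2.2.1 hg.2.2.2.2.2.1 hx₀ n ω
    have hofn : (List.ofFn fun i : Fin N => ω (j*N + i))
        = List.ofFn fun i : Fin N => ws (randOrbit f g x₀ (j*N) ω) i :=
      congrArg List.ofFn (funext fun i => hgood i)
    have hval : randOrbit f g x₀ (j*N + N) ω < Ag := by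
      rw [randOrbit_ow (j*N) N ω, hofn]
      exact hwsval _ (hmemX (j*N))
    have h0 : 0 ≤ randOrbit f g x₀ (j*N + N) ω := (hmemX (j*N + N)).1
    set m := j*N + N with hm
    have hext : Tendsto (fun n => randOrbit f g x₀ (n + m) ω) atTop (𝓝 0) := by
      apply extinct hf hg hA
      · intro n
        have hidx : n + 1 + m = (n + m) + 1 := by omega
        rw [hidx]
        exact randOrbit_step (n + m) ω
      · simpa using h0
      · simpa using hval
    exact (tendsto_add_atTop_iff_nat m).mp hext
  have hc0 : μ Tᶜ = 0 := measure_mono_null hincl hzero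
  apply le_antisymm prob_le_one
  calc (1:ENNReal) = μ univ := measure_univ.symm
  _ = μ (T ∪ Tᶜ) := by rw [Set.union_compl_self]
  _ ≤ μ T + μ Tᶜ := measure_union_le T Tᶜ
  _ = μ T := by rw [hc0, add_zero]
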